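/- Let (T, [−,−,−], ·) be a truss and e ∈ T, and let R(T;e) be the associated ring with addition a +_e b = [a,e,b] and multiplication a ∘ b = [[a·b, a·e, e], [e·b, e·e, e], e]. Define ε by λ(a) := [e·a, e·e, e] and ρ(a) := [a·e, e·e, e]. Then (λ, ρ, e·e) is a homothetic datum on the ring R(T;e); moreover, the original truss multiplication is recovered from this datum: a·b = ((a ∘ b) +_e ρ(a)) +_e λ(b) +_e (e·e) for all a, b ∈ T. -/
import Mathlib


/-- The retract addition `a +_e b := [a, e, b]` of a truss at `e`. -/
def tadd {T : Type*} (br : T → T → T → T) (e a b : T) : T := br a e b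

/-- The ring multiplication `a ∘ b := [[a·b, a·e, e], [e·b, e·e, e], e]` on the
retract of a truss at `e`. -/
def tcirc {T : Type*} (br : T → T → T → T) (mul : T → T → T) (e a b : T) : T :=
  br (br (mul a b) (mul a e) e) (br (mul e b) (mul e e) e) e

/-- The left operator `λ(a) := [e·a, e·e, e]` of the canonical homothetic datum. -/
def tlam {T : Type*} (br : T → T → T → T) (mul : T → T → T) (e a : T) : T :=
  br (mul e a) (mul e e) e

/-- The right operator `ρ(a) := [a·e, e·e, e]` of the canonical homothetic datum. -/
def trho {T : Type*} (br : T → T → T → T) (mul : T → T → T) (e a : T) : T :=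
  br (mul a e) (mul e e) e

/-- For any truss `T` and `e ∈ T`, the pair `(λ, ρ)` with `λ(a) = [e·a, e·e, e]`,
`ρ(a) = [a·e, e·e, e]`, together with `s = e·e`, is a homothetic datum on the
ring `R(T;e)` (with addition `+_e` and multiplication `∘`), and the original
truss multiplication is recovered as `a·b = ((a ∘ b) +_e ρ(a)) +_e λ(b) +_e e·e`. -/
theorem truss_canonical_homothetic_datum {T : Type*} (br : T → T → T → T)
    (mul : T → T → T)
    (hassoc : ∀ a b c d g : T, br a b (br c d g) = br (br a b c) d g)
    (hml : ∀ a b : T, br a a b = b)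
    (hmr : ∀ a b : T, br a b b = a)
    (hcomm : ∀ a b c : T, br a b c = br c b a)
    (hmulassoc : ∀ a b c : T, mul (mul a b) c = mul a (mul b c))
    (hdistl : ∀ a b c d : T, mul a (br b c d) = br (mul a b) (mul a c) (mul a d))
    (hdistr : ∀ a b c d : T, mul (br a b c) d = br (mul a d) (mul b d) (mul c d))
    (e : T) :
    (∀ a b : T, tlam br mul e (tadd br e a b)
        = tadd br e (tlam br mul e a) (tlam br mul e b)) ∧
    (∀ a b : T, trho br mul e (tadd br e a b)
        = tadd br e (trho br mul e a) (trho br mul e b)) ∧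
    (∀ a b : T, tlam br mul e (tcirc br mul e a b)
        = tcirc br mul e (tlam br mul e a) b) ∧
    (∀ a b : T, trho br mul e (tcirc br mul e a b)
        = tcirc br mul e a (trho br mul e b)) ∧
    (∀ a b : T, tcirc br mul e a (tlam br mul e b)
        = tcirc br mul e (trho br mul e a) b) ∧
    (∀ a : T, trho br mul e (tlam br mul e a) = tlam br mul e (trho br mul e a)) ∧
    (tlam br mul e (mul e e) = trho br mul e (mul e e)) ∧
    (∀ a : T, tlam br mul e (tlam br mul e a)
        = tadd br e (tlam br mul e a) (tcirc br mul e (mul e e) a)) ∧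
    (∀ a : T, trho br mul e (trho br mul e a)
        = tadd br e (trho br mul e a) (tcirc br mul e a (mul e e))) ∧
    (∀ a b : T, mul a b
        = tadd br e (tadd br e (tadd br e (tcirc br mul e a b) (trho br mul e a))
            (tlam br mul e b)) (mul e e)) := by

  letI : Add T := ⟨fun a b => br a e b⟩
  letI : Zero T := ⟨e⟩
  letI : Neg T := ⟨fun a => br e a e⟩
  letI G : AddCommGroup T :=
    { add_assoc := fun a b c => (hassoc a e b e c).symm
      zero_add := fun a => hml e a
      add_zero := fun a => hmr a e
      nsmul := nsmulRec
      zsmul := zsmulRec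
      neg_add_cancel := fun a => by
        show br (br e a e) e a = e
        rw [← hassoc, hml, hmr]
      add_comm := fun a b => hcomm a e b }
  have hbr : ∀ a b c : T, br a b c = a - b + c := by
    intro a b c
    show _ = br (br a e (br e b e)) e c
    rw [hassoc, hmr, ← hassoc, hml]
  have he : e = (0 : T) := rfl
  have L1 : ∀ a b c : T, mul a (b + c) = mul a b + mul a c - mul a e := by
    intro a b c
    show mul a (br b e c) = _
    rw [hdistl, hbr]; abel
  have L2 : ∀ a b : T, mul a (-b) = mul a e + mul a e - mul a b := by
    intro a b
    show mul a (br e b e) = _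
    rw [hdistl, hbr]; abel
  have R1 : ∀ a b c : T, mul (a + b) c = mul a c + mul b c - mul e c := by
    intro a b c
    show mul (br a e b) c = _
    rw [hdistr, hbr]; abel
  have R2 : ∀ a b : T, mul (-a) b = mul e b + mul e b - mul a b := by
    intro a b
    show mul (br e a e) b = _
    rw [hdistr, hbr]; abel
  refine ⟨?_, ?_, ?_, ?_, ?_, ?_, ?_, ?_, ?_, ?_⟩ <;>
    intros <;>
    simp only [tadd, tcirc, tlam, trho, hbr, he, sub_eq_add_neg, L1, L2, R1, R2,
      hmulassoc] <;>
    abel
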